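/- With the topology τ_Γ induced by a well-bounded partition Γ of ℚ, the Hahn field 𝓕 is a topological real vector space: singletons are closed, addition 𝓕 × 𝓕 → 𝓕 is continuous, and scalar multiplication ℝ × 𝓕 → 𝓕 is continuous. -/

import Mathlib

open scoped Classical

/-- The Hahn field `𝓕` of maps `ℚ → ℝ` with well-ordered support. -/
noncomputable abbrev F := HahnSeries ℚ ℝ

/-- A subset `A` of `ℚ` is well-bounded if every nonempty subset of `A`
has a maximum element. -/
def WellBoundedSet (A : Set ℚ) : Prop :=
  ∀ S ⊆ A, S.Nonempty → ∃ m ∈ S, ∀ a ∈ S, a ≤ m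

/-- A well-bounded partition of `ℚ`: a countable family of mutually disjoint
well-bounded sets whose union is all of `ℚ`. -/
def IsWBPartition (γ : ℕ → Set ℚ) : Prop :=
  Pairwise (Function.onFun Disjoint γ) ∧ (∀ i, WellBoundedSet (γ i)) ∧
    (⋃ i, γ i) = Set.univ

/-- A finite well-bounded partition of `ℚ`: each piece is moreover finite. -/
def IsFinWBPartition (γ : ℕ → Set ℚ) : Prop :=
  IsWBPartition γ ∧ ∀ i, (γ i).Finite

/-- `Γ_n`, the union of the first `n` pieces of the partition. -/
def Gam (γ : ℕ → Set ℚ) (n : ℕ) : Set ℚ := ⋃ i < n, γ i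

/-- The semi-norm `‖x‖_{Γ,n} = max {|x[q]| : q ∈ Γ_n}` induced by a well-bounded
partition `Γ` of `ℚ` (realized as a supremum together with `0`). -/
noncomputable def gnorm (γ : ℕ → Set ℚ) (n : ℕ) (x : F) : ℝ :=
  sSup (insert 0 ((fun q => |x.coeff q|) '' Gam γ n))

/-- `μ(r) = ⌈1/r⌉`. -/
noncomputable def mu (r : ℝ) : ℕ := ⌈1 / r⌉₊

/-- The pseudo-ball `B_Γ(x, r) = {y | ‖x − y‖_{Γ,μ(r)} < r}`. -/
def PB (γ : ℕ → Set ℚ) (x : F) (r : ℝ) : Set F :=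
  {y : F | gnorm γ (mu r) (x - y) < r}

/-- The topology `τ_Γ` induced by the semi-norms of the partition `Γ`, as the
collection of its open sets. -/
def Top' (γ : ℕ → Set ℚ) : Set (Set F) :=
  {O : Set F | ∀ x ∈ O, ∃ r : ℝ, 0 < r ∧ PB γ x r ⊆ O}

/-! ### Auxiliary lemmas -/

lemma wb_union {A B : Set ℚ} (hA : WellBoundedSet A) (hB : WellBoundedSet B) :
    WellBoundedSet (A ∪ B) := by
  intro S hS hne
  by_cases hSA : (S ∩ A).Nonempty
  · obtain ⟨a, haS, ha⟩ := hA (S ∩ A) Set.inter_subset_right hSA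
    by_cases hSB : (S ∩ B).Nonempty
    · obtain ⟨b, hbS, hb⟩ := hB (S ∩ B) Set.inter_subset_right hSB
      refine ⟨max a b, ?_, ?_⟩
      · rcases le_total a b with h | h
        · simpa [max_eq_right h] using hbS.1
        · simpa [max_eq_left h] using haS.1
      · intro c hc
        rcases hS hc with h | h
        · exact le_max_of_le_left (ha c ⟨hc, h⟩)
        · exact le_max_of_le_right (hb c ⟨hc, h⟩)
    · refine ⟨a, haS.1, fun c hc => ?_⟩
      rcases hS hc with h | h
      · exact ha c ⟨hc, h⟩
      · exact absurd ⟨c, hc, h⟩ hSB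
  · have hsub : S ⊆ B := by
      intro c hc
      rcases hS hc with h | h
      · exact absurd ⟨c, hc, h⟩ hSA
      · exact h
    obtain ⟨b, hbS, hb⟩ := hB S hsub hne
    exact ⟨b, hbS, hb⟩

lemma wb_Gam {γ : ℕ → Set ℚ} (hwb : ∀ i, WellBoundedSet (γ i)) (n : ℕ) :
    WellBoundedSet (Gam γ n) := by
  induction n with
  | zero =>
      intro S hS hne
      obtain ⟨a, ha⟩ := hne
      have : a ∈ Gam γ 0 := hS ha
      simp [Gam] at this
  | succ n ih =>
      have : Gam γ (n + 1) = Gam γ n ∪ γ n := by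
        ext q
        simp only [Gam, Set.mem_union, Set.mem_iUnion, Nat.lt_succ_iff_lt_or_eq, exists_prop]
        constructor
        · rintro ⟨i, hi | rfl, h⟩
          · exact Or.inl ⟨i, hi, h⟩
          · exact Or.inr h
        · rintro (⟨i, hi, h⟩ | h)
          · exact ⟨i, Or.inl hi, h⟩
          · exact ⟨n, Or.inr rfl, h⟩
      rw [this]
      exact wb_union ih (hwb n)

lemma Gam_mono {γ : ℕ → Set ℚ} {n m : ℕ} (h : n ≤ m) : Gam γ n ⊆ Gam γ m := by
  intro q hq
  simp only [Gam, Set.mem_iUnion] at hq ⊢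
  obtain ⟨i, hi, hqi⟩ := hq
  exact ⟨i, lt_of_lt_of_le hi h, hqi⟩

lemma mu_anti {r r' : ℝ} (hr' : 0 < r') (h : r' ≤ r) : mu r ≤ mu r' :=
  Nat.ceil_mono (one_div_le_one_div_of_le hr' h)

/-- The intersection of `Γ_n` with the support of a Hahn series is finite. -/
lemma gam_inter_finite {γ : ℕ → Set ℚ} (hwb : ∀ i, WellBoundedSet (γ i)) (n : ℕ) (x : F) :
    (Gam γ n ∩ x.support).Finite := by
  by_contra hinf
  set S := Gam γ n ∩ x.support with hS
  have hinf' : S.Infinite := hinf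
  have hwf : S.IsWF := x.isWF_support.mono Set.inter_subset_right
  have hpwo : S.IsPWO := hwf.isPWO
  set f : ℕ → ℚ := fun k => (hinf'.natEmbedding _ k : ℚ) with hf
  have hfS : ∀ k, f k ∈ S := fun k => (hinf'.natEmbedding _ k).2
  have hfinj : Function.Injective f := fun a b hab =>
    (hinf'.natEmbedding _).injective (Subtype.val_injective hab)
  obtain ⟨g, hg⟩ := hpwo.exists_monotone_subseq hfS
  -- range (f ∘ g) is a nonempty subset of Gam γ n with no max
  obtain ⟨m, hmS, hmax⟩ := wb_Gam hwb n (Set.range (f ∘ g))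
    (by rintro q ⟨k, rfl⟩; exact (hfS (g k)).1) ⟨f (g 0), 0, rfl⟩
  obtain ⟨k, hk⟩ := hmS
  have h1 : (f ∘ g) k ≤ (f ∘ g) (k + 1) := hg (Nat.le_succ k)
  have h2 : (f ∘ g) k ≠ (f ∘ g) (k + 1) := fun h =>
    Nat.succ_ne_self k (g.injective (hfinj h)).symm
  have h3 : (f ∘ g) (k + 1) ≤ m := hmax _ ⟨k + 1, rfl⟩
  rw [← hk] at h3
  exact h2 (le_antisymm h1 h3)

/-- The defining set of `gnorm` equals a finite set. -/
lemma gnorm_set_eq (γ : ℕ → Set ℚ) (n : ℕ) (x : F) :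
    insert 0 ((fun q => |x.coeff q|) '' Gam γ n) =
      insert 0 ((fun q => |x.coeff q|) '' (Gam γ n ∩ x.support)) := by
  ext a
  simp only [Set.mem_insert_iff, Set.mem_image]
  constructor
  · rintro (rfl | ⟨q, hq, rfl⟩)
    · exact Or.inl rfl
    · by_cases hs : q ∈ x.support
      · exact Or.inr ⟨q, ⟨hq, hs⟩, rfl⟩
      · simp only [HahnSeries.mem_support, not_not] at hs
        exact Or.inl (by simp [hs])
  · rintro (rfl | ⟨q, hq, rfl⟩)
    · exact Or.inl rfl
    · exact Or.inr ⟨q, hq.1, rfl⟩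

lemma gnorm_set_finite {γ : ℕ → Set ℚ} (hwb : ∀ i, WellBoundedSet (γ i)) (n : ℕ) (x : F) :
    (insert 0 ((fun q => |x.coeff q|) '' Gam γ n)).Finite := by
  rw [gnorm_set_eq]
  exact ((gam_inter_finite hwb n x).image _).insert 0

lemma gnorm_nonneg {γ : ℕ → Set ℚ} (hwb : ∀ i, WellBoundedSet (γ i)) (n : ℕ) (x : F) :
    0 ≤ gnorm γ n x :=
  le_csSup (gnorm_set_finite hwb n x).bddAbove (Set.mem_insert 0 _)

lemma gnorm_coeff_le {γ : ℕ → Set ℚ} (hwb : ∀ i, WellBoundedSet (γ i)) {n : ℕ} (x : F)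
    {q : ℚ} (hq : q ∈ Gam γ n) : |x.coeff q| ≤ gnorm γ n x :=
  le_csSup (gnorm_set_finite hwb n x).bddAbove (Set.mem_insert_of_mem _ ⟨q, hq, rfl⟩)

lemma gnorm_lt {γ : ℕ → Set ℚ} (hwb : ∀ i, WellBoundedSet (γ i)) {n : ℕ} {x : F} {r : ℝ}
    (hr : 0 < r) (h : ∀ q ∈ Gam γ n, |x.coeff q| < r) : gnorm γ n x < r := by
  rw [gnorm, (gnorm_set_finite hwb n x).csSup_lt_iff (Set.insert_nonempty _ _)]
  rintro b (rfl | ⟨q, hq, rfl⟩)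
  · exact hr
  · exact h q hq

theorem hahn_topological_vector_space (γ : ℕ → Set ℚ) (hγ : IsWBPartition γ) :
    (∀ x : F, ({x}ᶜ : Set F) ∈ Top' γ) ∧
    (∀ O ∈ Top' γ, ∀ x₁ x₂ : F, x₁ + x₂ ∈ O →
      ∃ r : ℝ, 0 < r ∧ ∀ y ∈ PB γ x₁ r, ∀ z ∈ PB γ x₂ r, y + z ∈ O) ∧
    (∀ O ∈ Top' γ, ∀ (α : ℝ) (x : F), α • x ∈ O →
      ∃ ε : ℝ, 0 < ε ∧ ∃ r : ℝ, 0 < r ∧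
        ∀ β : ℝ, |β - α| < ε → ∀ y ∈ PB γ x r, β • y ∈ O) := by
  obtain ⟨-, hwb, huniv⟩ := hγ
  refine ⟨?_, ?_, ?_⟩
  · -- singletons closed
    intro x y hy
    have hne : y ≠ x := hy
    have hyx : y - x ≠ 0 := sub_ne_zero.mpr hne
    obtain ⟨q, hq⟩ : ∃ q, (y - x).coeff q ≠ 0 := by
      by_contra h
      push_neg at h
      exact hyx (HahnSeries.ext (funext h))
    obtain ⟨i, hqi⟩ : ∃ i, q ∈ γ i := by
      have : q ∈ ⋃ i, γ i := huniv ▸ Set.mem_univ q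
      exact Set.mem_iUnion.mp this
    set r := min |(y - x).coeff q| (1 / ((i : ℝ) + 1)) with hrdef
    have hr : 0 < r := lt_min (abs_pos.mpr hq) (by positivity)
    refine ⟨r, hr, ?_⟩
    intro z hz
    simp only [Set.mem_compl_iff, Set.mem_singleton_iff]
    intro hzx
    rw [hzx] at hz
    have hqGam : q ∈ Gam γ (mu r) := by
      have h1 : ((i : ℝ) + 1) ≤ 1 / r := by
        have h := one_div_le_one_div_of_le hr
          (min_le_right |(y - x).coeff q| (1 / ((i : ℝ) + 1)))
        rwa [one_div_one_div] at h
      have h2 : i + 1 ≤ mu r := by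
        have h3 := Nat.le_ceil (1 / r)
        have h4 : ((i : ℝ) + 1) ≤ (mu r : ℝ) := le_trans h1 h3
        exact_mod_cast h4
      simp only [Gam, Set.mem_iUnion]
      exact ⟨i, lt_of_lt_of_le (Nat.lt_succ_self i) h2, hqi⟩
    have hle : |(y - x).coeff q| ≤ gnorm γ (mu r) (y - x) := gnorm_coeff_le hwb _ hqGam
    have hlt : gnorm γ (mu r) (y - x) < r := hz
    have hge : r ≤ |(y - x).coeff q| := min_le_left _ _
    linarith
  · -- addition continuous
    intro O hO x₁ x₂ hx
    obtain ⟨r, hr, hrO⟩ := hO _ hx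
    refine ⟨r / 2, by linarith, ?_⟩
    intro y hy z hz
    apply hrO
    have hmu : mu r ≤ mu (r / 2) := mu_anti (by linarith) (by linarith)
    refine gnorm_lt hwb hr ?_
    intro q hq
    have hq' : q ∈ Gam γ (mu (r / 2)) := Gam_mono hmu hq
    have h1 : |(x₁ - y).coeff q| < r / 2 :=
      lt_of_le_of_lt (gnorm_coeff_le hwb _ hq') hy
    have h2 : |(x₂ - z).coeff q| < r / 2 :=
      lt_of_le_of_lt (gnorm_coeff_le hwb _ hq') hz
    have heq : (x₁ + x₂ - (y + z)).coeff q = (x₁ - y).coeff q + (x₂ - z).coeff q := by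
      simp [HahnSeries.coeff_sub, HahnSeries.coeff_add]; ring
    rw [heq]
    calc |(x₁ - y).coeff q + (x₂ - z).coeff q|
        ≤ |(x₁ - y).coeff q| + |(x₂ - z).coeff q| := abs_add_le _ _
      _ < r := by linarith
  · -- scalar multiplication continuous
    intro O hO α x hx
    obtain ⟨r, hr, hrO⟩ := hO _ hx
    set M := gnorm γ (mu r) x with hM
    have hM0 : 0 ≤ M := gnorm_nonneg hwb _ x
    set ε := r / (2 * (M + r + 1)) with hε
    set r' := min r (r / (2 * (|α| + 1))) with hr'def
    have hεpos : 0 < ε := by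
      apply div_pos hr
      positivity
    have hr'pos : 0 < r' := lt_min hr (by positivity)
    have hr'r : r' ≤ r := min_le_left _ _
    refine ⟨ε, hεpos, r', hr'pos, ?_⟩
    intro β hβ y hy
    apply hrO
    have hmu : mu r ≤ mu r' := mu_anti hr'pos hr'r
    refine gnorm_lt hwb hr ?_
    intro q hq
    have hq' : q ∈ Gam γ (mu r') := Gam_mono hmu hq
    have hxy : |(x - y).coeff q| < r' := lt_of_le_of_lt (gnorm_coeff_le hwb _ hq') hy
    have hxM : |x.coeff q| ≤ M := gnorm_coeff_le hwb _ hq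
    have hyb : |y.coeff q| ≤ M + r' := by
      have : |y.coeff q| ≤ |x.coeff q| + |(x - y).coeff q| := by
        have : y.coeff q = x.coeff q - (x - y).coeff q := by
          simp [HahnSeries.coeff_sub]
        rw [this]
        exact abs_sub _ _
      linarith
    have heq : (α • x - β • y).coeff q
        = α * ((x - y).coeff q) + (α - β) * y.coeff q := by
      simp [HahnSeries.coeff_sub, HahnSeries.coeff_smul, smul_eq_mul]
      ring
    rw [heq]
    have h1 : |α * ((x - y).coeff q)| < r / 2 := by
      rw [abs_mul]
      have hb : |(x - y).coeff q| ≤ r / (2 * (|α| + 1)) :=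
        le_trans hxy.le (min_le_right _ _)
      have hα0 : 0 ≤ |α| := abs_nonneg α
      calc |α| * |(x - y).coeff q| ≤ |α| * (r / (2 * (|α| + 1))) :=
            mul_le_mul_of_nonneg_left hb hα0
        _ < r / 2 := by
            have key : (|α| + 1) * (r / (2 * (|α| + 1))) = r / 2 := by
              field_simp
            nlinarith [abs_nonneg α, div_pos hr (by positivity : (0:ℝ) < 2 * (|α| + 1))]
    have h2 : |(α - β) * y.coeff q| < r / 2 := by
      rw [abs_mul]
      have hab : |α - β| < ε := by rwa [abs_sub_comm]
      calc |α - β| * |y.coeff q| ≤ ε * (M + r) := by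
            apply mul_le_mul hab.le (hyb.trans (by linarith)) (abs_nonneg _) hεpos.le
        _ < r / 2 := by
            have key : ε * (M + r + 1) = r / 2 := by
              rw [hε]; field_simp
            nlinarith
    calc |α * ((x - y).coeff q) + (α - β) * y.coeff q|
        ≤ |α * ((x - y).coeff q)| + |(α - β) * y.coeff q| := abs_add_le _ _
      _ < r := by linarith
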